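/- In a parallel system under the local metric with perfect repairs, equal repair costs C_{R,i} = C_R > 0 for all components, and equal inspection error rates for all components, if p_i ≤ p_j (and 0 < h_i < 1, 0 < h_j < 1) then VoI_L(i) ≥ VoI_L(j); i.e. the local metric also gives highest priority to the most reliable component, consistently with the global metric. -/

import Mathlib

open scoped Classical

/-- Probability of an event `E` under weights `w` on a finite outcome space. -/
noncomputable def Pr {Ω : Type*} [Fintype Ω] (w : Ω → ℝ) (E : Ω → Prop) : ℝ :=
  ∑ ω ∈ Finset.univ.filter E, w ω

/-- Conditional probability `P[A | B]`. -/
noncomputable def cPr {Ω : Type*} [Fintype Ω] (w : Ω → ℝ) (A B : Ω → Prop) : ℝ :=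
  Pr w (fun ω => A ω ∧ B ω) / Pr w B

/-- Conditional expectation `E[f | B]` (expectation of `f` under the posterior given `B`). -/
noncomputable def cExp {Ω : Type*} [Fintype Ω] (w : Ω → ℝ) (f : Ω → ℝ) (B : Ω → Prop) : ℝ :=
  (∑ ω ∈ Finset.univ.filter B, w ω * f ω) / Pr w B

/-- Total maintenance loss for a parallel system under the local metric: repairing each
component costs `CR` (perfect repairs), and since repairing any single component guarantees
system functioning, the failure cost `CF` is paid iff no component is repaired and every
component is failed. -/
noncomputable def parallelLoss {Ω : Type*} {N : ℕ} (CR CF : ℝ) (s : Ω → Fin N → Bool)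
    (A : Fin N → Bool) (ω : Ω) : ℝ :=
  CR * (∑ k, if A k = true then 1 else 0)
    + CF * (if (∀ k, A k = false) ∧ (∀ k, s ω k = false) then 1 else 0)

section
variable {Ω : Type*} [Fintype Ω] (w : Ω → ℝ)

lemma Pr_nonneg (hw0 : ∀ ω, 0 ≤ w ω) (E : Ω → Prop) : 0 ≤ Pr w E :=
  Finset.sum_nonneg fun ω _ => hw0 ω

lemma Pr_congr {E F : Ω → Prop} (h : ∀ ω, E ω ↔ F ω) : Pr w E = Pr w F := by
  unfold Pr
  refine Finset.sum_congr ?_ fun _ _ => rfl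
  ext ω; simp [h ω]

lemma Pr_mono (hw0 : ∀ ω, 0 ≤ w ω) {E F : Ω → Prop} (h : ∀ ω, E ω → F ω) :
    Pr w E ≤ Pr w F := by
  refine Finset.sum_le_sum_of_subset_of_nonneg ?_ fun ω _ _ => hw0 ω
  intro ω hω
  simp only [Finset.mem_filter, Finset.mem_univ, true_and] at *
  exact h ω hω

lemma Pr_true (hw1 : ∑ ω, w ω = 1) : Pr w (fun _ => True) = 1 := by
  unfold Pr; simpa using hw1

lemma Pr_le_one (hw0 : ∀ ω, 0 ≤ w ω) (hw1 : ∑ ω, w ω = 1) (E : Ω → Prop) :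
    Pr w E ≤ 1 := by
  rw [← Pr_true w hw1]; exact Pr_mono w hw0 fun ω _ => trivial

lemma Pr_false : Pr w (fun _ => False) = 0 := by
  unfold Pr; simp

lemma Pr_split (E A : Ω → Prop) :
    Pr w E = Pr w (fun ω => E ω ∧ A ω) + Pr w (fun ω => E ω ∧ ¬ A ω) := by
  unfold Pr
  rw [← Finset.sum_filter_add_sum_filter_not (Finset.univ.filter E) A w]
  congr 1 <;>
  · rw [Finset.filter_filter]
    exact Finset.sum_congr (by ext ω; simp) fun _ _ => rfl

lemma Pr_fiber {N : ℕ} (s : Ω → Fin N → Bool) (E : Ω → Prop) :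
    Pr w E = ∑ σ : Fin N → Bool, Pr w (fun ω => E ω ∧ s ω = σ) := by
  unfold Pr
  rw [← Finset.sum_fiberwise_of_maps_to (fun ω _ => Finset.mem_univ (s ω)) w]
  refine Finset.sum_congr rfl fun σ _ => ?_
  rw [Finset.filter_filter]
  exact Finset.sum_congr (by ext ω; simp) fun _ _ => rfl
end

lemma inf_linear_loss {N : ℕ} (CR c : ℝ) (hCR : 0 < CR) (hc : 0 ≤ c) (i : Fin N) :
    (Finset.univ.inf' Finset.univ_nonempty fun A : Fin N → Bool =>
        CR * (∑ k, if A k = true then (1:ℝ) else 0) + c * (if (∀ k, A k = false) then 1 else 0))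
      = min c CR := by
  apply le_antisymm
  · apply le_min
    · have h := Finset.inf'_le (b := (fun _ => false : Fin N → Bool))
        (fun A : Fin N → Bool =>
          CR * (∑ k, if A k = true then (1:ℝ) else 0) + c * (if (∀ k, A k = false) then 1 else 0))
        (Finset.mem_univ _)
      exact h.trans (le_of_eq (by simp))
    · have h := Finset.inf'_le (b := (fun k => decide (k = i) : Fin N → Bool))
        (fun A : Fin N → Bool =>
          CR * (∑ k, if A k = true then (1:ℝ) else 0) + c * (if (∀ k, A k = false) then 1 else 0))
        (Finset.mem_univ _)
      have h1 : (∑ k : Fin N, if (decide (k = i) : Bool) = true then (1:ℝ) else 0) = 1 := by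
        simp [Finset.sum_ite_eq']
      have h2 : ¬ (∀ k : Fin N, (decide (k = i) : Bool) = false) := by
        intro hk; have := hk i; simp at this
      rw [h1, if_neg h2] at h
      exact h.trans (le_of_eq (by simp))
  · apply Finset.le_inf'
    intro A _
    by_cases hA : ∀ k, A k = false
    · have h1 : (∑ k : Fin N, if A k = true then (1:ℝ) else 0) = 0 := by
        refine Finset.sum_eq_zero fun k _ => ?_
        rw [hA k]; simp
      rw [h1, if_pos hA]
      simpa using min_le_left c CR
    · push_neg at hA
      obtain ⟨k, hk⟩ := hA
      have hk' : A k = true := by revert hk; cases A k <;> simp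
      have hm : (1:ℝ) ≤ ∑ k : Fin N, if A k = true then (1:ℝ) else 0 := by
        calc (1:ℝ) = if A k = true then (1:ℝ) else 0 := by rw [if_pos hk']
          _ ≤ _ := Finset.single_le_sum
              (f := fun k : Fin N => if A k = true then (1:ℝ) else 0)
              (fun k _ => by by_cases h : A k = true <;> simp [h]) (Finset.mem_univ k)
      have hA' : ¬ (∀ k, A k = false) := fun h => by rw [h k] at hk'; simp at hk'
      rw [if_neg hA']
      have : CR ≤ CR * ∑ k : Fin N, if A k = true then (1:ℝ) else 0 :=
        le_mul_of_one_le_right hCR.le hm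
      have := min_le_right c CR
      linarith

lemma inf_cExp_loss {Ω : Type*} [Fintype Ω] {N : ℕ} (w : Ω → ℝ) (hw0 : ∀ ω, 0 ≤ w ω)
    (s : Ω → Fin N → Bool) (CR CF : ℝ) (hCR : 0 < CR) (hCF : 0 < CF)
    (B : Ω → Prop) (hB : 0 < Pr w B) (i : Fin N) :
    (Finset.univ.inf' Finset.univ_nonempty fun A : Fin N → Bool =>
        cExp w (parallelLoss CR CF s A) B)
      = min (CF * (Pr w (fun ω => (∀ k, s ω k = false) ∧ B ω) / Pr w B)) CR := by
  have hBne : Pr w B ≠ 0 := ne_of_gt hB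
  have hpoint : ∀ A : Fin N → Bool, cExp w (parallelLoss CR CF s A) B
      = CR * (∑ k, if A k = true then (1:ℝ) else 0)
        + (CF * (Pr w (fun ω => (∀ k, s ω k = false) ∧ B ω) / Pr w B))
            * (if (∀ k, A k = false) then 1 else 0) := by
    intro A
    unfold cExp parallelLoss
    have hnum : (∑ ω ∈ Finset.univ.filter B, w ω *
        (CR * (∑ k, if A k = true then (1:ℝ) else 0)
          + CF * (if (∀ k, A k = false) ∧ (∀ k, s ω k = false) then 1 else 0)))
      = Pr w B * (CR * (∑ k, if A k = true then (1:ℝ) else 0))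
        + CF * Pr w (fun ω => (∀ k, s ω k = false) ∧ B ω)
            * (if (∀ k, A k = false) then 1 else 0) := by
      simp only [mul_add]
      rw [Finset.sum_add_distrib]
      congr 1
      · rw [← Finset.sum_mul]; rfl
      · by_cases hA : ∀ k, A k = false
        · rw [if_pos hA, mul_one]
          have : ∀ ω, w ω * (CF * (if (∀ k, A k = false) ∧ (∀ k, s ω k = false) then (1:ℝ) else 0))
              = CF * (if (∀ k, s ω k = false) then w ω else 0) := by
            intro ω
            by_cases hs : ∀ k, s ω k = false
            · rw [if_pos ⟨hA, hs⟩, if_pos hs]; ring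
            · rw [if_neg (fun h => hs h.2), if_neg hs]; ring
          rw [Finset.sum_congr rfl (fun ω _ => this ω), ← Finset.mul_sum]
          congr 1
          rw [← Finset.sum_filter, Finset.filter_filter]
          unfold Pr
          exact Finset.sum_congr (by ext ω; simp [and_comm]) fun _ _ => rfl
        · rw [if_neg hA, mul_zero]
          refine Finset.sum_eq_zero fun ω _ => ?_
          rw [if_neg (fun h => hA h.1)]; ring
    rw [hnum]
    field_simp
  rw [Finset.inf'_congr Finset.univ_nonempty rfl (fun A _ => hpoint A)]
  exact inf_linear_loss CR _ hCR
    (mul_nonneg hCF.le (div_nonneg (Pr_nonneg w hw0 _) hB.le)) i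
lemma key_min_ineq (CR CF q εFS hi hj : ℝ) (hCR : 0 < CR) (hCF : 0 < CF) (hq : 0 ≤ q)
    (hεFS0 : 0 ≤ εFS) (hεFS1 : εFS < 1) (hij : hi ≤ hj) (hhj : hj ≤ 1 - εFS) :
    min (CF * ((1 - εFS) * q)) (CR * hi) + min (CF * (εFS * q)) (CR * (1 - hi))
      ≤ min (CF * ((1 - εFS) * q)) (CR * hj) + min (CF * (εFS * q)) (CR * (1 - hj)) := by
  set a := CF * ((1 - εFS) * q) with ha_def
  set b := CF * (εFS * q) with hb_def
  have hM : min a (CR * hi) + min b (CR * (1 - hi))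
      ≤ min (a + b) (min (b + CR * hj) CR) := by
    refine le_min (add_le_add (min_le_left _ _) (min_le_left _ _)) (le_min ?_ ?_)
    · have h1 : min a (CR * hi) ≤ CR * hi := min_le_right _ _
      have h2 : min b (CR * (1 - hi)) ≤ b := min_le_left _ _
      have h3 : CR * hi ≤ CR * hj := mul_le_mul_of_nonneg_left hij hCR.le
      linarith
    · have h1 : min a (CR * hi) ≤ CR * hi := min_le_right _ _
      have h2 : min b (CR * (1 - hi)) ≤ CR * (1 - hi) := min_le_right _ _
      nlinarith
  refine hM.trans ?_
  rcases le_or_gt a (CR * hj) with h1 | h1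
  · rcases le_or_gt b (CR * (1 - hj)) with h2 | h2
    · rw [min_eq_left h1, min_eq_left h2]
      exact min_le_left _ _
    · rw [min_eq_left h1, min_eq_right h2.le]
      have hb0 : 0 < b := lt_of_le_of_lt (mul_nonneg hCR.le (by linarith)) h2
      have hε : 0 < εFS := by nlinarith
      have hq0 : 0 < q := by nlinarith
      have hCRq : CR < CF * q := by
        have h3 : CR * εFS ≤ CR * (1 - hj) := mul_le_mul_of_nonneg_left (by linarith) hCR.le
        have h4 : CR * εFS < CF * (εFS * q) := lt_of_le_of_lt h3 h2
        nlinarith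
      have ha : CR * hj ≤ a := by nlinarith
      calc min (a + b) (min (b + CR * hj) CR) ≤ CR := (min_le_right _ _).trans (min_le_right _ _)
        _ ≤ a + CR * (1 - hj) := by nlinarith
  · rw [min_eq_right h1.le]
    rcases le_or_gt b (CR * (1 - hj)) with h2 | h2
    · rw [min_eq_left h2]
      exact (min_le_right _ _).trans ((min_le_left _ _).trans (by linarith))
    · rw [min_eq_right h2.le]
      refine (min_le_right _ _).trans ((min_le_right _ _).trans ?_)
      nlinarith

/-- In a parallel system under the local metric with perfect repairs, equal
repair costs `C_R > 0`, and equal inspection error rates for all components, if `p_i ≤ p_j`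
(and `0 < h_i < 1`, `0 < h_j < 1`) then `VoI_L(i) ≥ VoI_L(j)`: the local metric also gives
highest priority to the most reliable component, consistently with the global metric. -/
theorem parallel_local_prefers_most_reliable {Ω : Type*} [Fintype Ω] {N : ℕ} (w : Ω → ℝ)
    (hw0 : ∀ ω, 0 ≤ w ω) (hw1 : ∑ ω, w ω = 1)
    (s : Ω → Fin N → Bool) (y : Fin N → Ω → Bool)
    (εFA εFS : ℝ) (hFA0 : 0 ≤ εFA) (hFA : εFA < 1/2) (hFS0 : 0 ≤ εFS) (hFS : εFS < 1/2)
    (hemit : ∀ (k : Fin N) (σ : Fin N → Bool), 0 < Pr w (fun ω => s ω = σ) →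
      cPr w (fun ω => y k ω = false) (fun ω => s ω = σ)
        = if σ k = true then εFA else 1 - εFS)
    (CR CF : ℝ) (hCR : 0 < CR) (hCF : 0 < CF)
    (i j : Fin N)
    (hi0 : 0 < Pr w (fun ω => y i ω = false)) (hi1 : Pr w (fun ω => y i ω = false) < 1)
    (hj0 : 0 < Pr w (fun ω => y j ω = false)) (hj1 : Pr w (fun ω => y j ω = false) < 1)
    (hpij : Pr w (fun ω => s ω i = false) ≤ Pr w (fun ω => s ω j = false)) :
    (Finset.univ.inf' Finset.univ_nonempty fun A : Fin N → Bool =>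
          ∑ ω, w ω * parallelLoss CR CF s A ω)
      - (Pr w (fun ω => y j ω = false) *
          (Finset.univ.inf' Finset.univ_nonempty fun A : Fin N → Bool =>
            cExp w (parallelLoss CR CF s A) (fun ω => y j ω = false))
        + (1 - Pr w (fun ω => y j ω = false)) *
          (Finset.univ.inf' Finset.univ_nonempty fun A : Fin N → Bool =>
            cExp w (parallelLoss CR CF s A) (fun ω => y j ω = true)))
    ≤ (Finset.univ.inf' Finset.univ_nonempty fun A : Fin N → Bool =>
          ∑ ω, w ω * parallelLoss CR CF s A ω)
      - (Pr w (fun ω => y i ω = false) *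
          (Finset.univ.inf' Finset.univ_nonempty fun A : Fin N → Bool =>
            cExp w (parallelLoss CR CF s A) (fun ω => y i ω = false))
        + (1 - Pr w (fun ω => y i ω = false)) *
          (Finset.univ.inf' Finset.univ_nonempty fun A : Fin N → Bool =>
            cExp w (parallelLoss CR CF s A) (fun ω => y i ω = true))) := by
  -- joint emission probabilities
  have hemit' : ∀ (k : Fin N) (σ : Fin N → Bool),
      Pr w (fun ω => y k ω = false ∧ s ω = σ)
        = (if σ k = true then εFA else 1 - εFS) * Pr w (fun ω => s ω = σ) := by
    intro k σ
    rcases lt_or_ge 0 (Pr w (fun ω => s ω = σ)) with hpos | hle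
    · have h := hemit k σ hpos
      unfold cPr at h
      rw [div_eq_iff (ne_of_gt hpos)] at h
      exact h
    · have h0 : Pr w (fun ω => s ω = σ) = 0 := le_antisymm hle (Pr_nonneg w hw0 _)
      rw [h0, mul_zero]
      refine le_antisymm ?_ (Pr_nonneg w hw0 _)
      calc Pr w (fun ω => y k ω = false ∧ s ω = σ)
          ≤ Pr w (fun ω => s ω = σ) := Pr_mono w hw0 fun ω h => h.2
        _ = 0 := h0
  -- p_k as a fiber sum
  have hpk : ∀ k : Fin N,
      (∑ σ : Fin N → Bool, (if σ k = false then (1:ℝ) else 0) * Pr w (fun ω => s ω = σ))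
        = Pr w (fun ω => s ω k = false) := by
    intro k
    rw [Pr_fiber w s (fun ω => s ω k = false)]
    refine Finset.sum_congr rfl fun σ _ => ?_
    by_cases hσ : σ k = false
    · rw [if_pos hσ, one_mul]
      refine Pr_congr w fun ω => ?_
      constructor
      · intro h; exact ⟨by rw [h]; exact hσ, h⟩
      · exact And.right
    · rw [if_neg hσ, zero_mul]
      refine (le_antisymm ?_ (Pr_nonneg w hw0 _)).symm
      calc Pr w (fun ω => s ω k = false ∧ s ω = σ)
          ≤ Pr w (fun _ => False) := Pr_mono w hw0 fun ω h => hσ (h.2 ▸ h.1)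
        _ = 0 := Pr_false w
  have hsum1 : (∑ σ : Fin N → Bool, Pr w (fun ω => s ω = σ)) = 1 := by
    have h := Pr_fiber w s (fun _ => True)
    rw [Pr_true w hw1] at h
    rw [h]
    exact Finset.sum_congr rfl fun σ _ => Pr_congr w fun ω => by simp
  -- h_k formula
  have hh : ∀ k : Fin N, Pr w (fun ω => y k ω = false)
      = εFA + (1 - εFS - εFA) * Pr w (fun ω => s ω k = false) := by
    intro k
    rw [Pr_fiber w s (fun ω => y k ω = false)]
    rw [Finset.sum_congr rfl fun σ _ => hemit' k σ]
    have : ∀ σ : Fin N → Bool,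
        (if σ k = true then εFA else 1 - εFS) * Pr w (fun ω => s ω = σ)
          = εFA * Pr w (fun ω => s ω = σ)
            + (1 - εFS - εFA) * ((if σ k = false then (1:ℝ) else 0) * Pr w (fun ω => s ω = σ)) := by
      intro σ
      cases hσ : σ k <;> simp [hσ] <;> ring
    rw [Finset.sum_congr rfl fun σ _ => this σ, Finset.sum_add_distrib,
      ← Finset.mul_sum, ← Finset.mul_sum, hsum1, hpk k]
    ring
  -- failure-and-outcome probabilities
  have hf0 : ∀ k : Fin N, Pr w (fun ω => (∀ k', s ω k' = false) ∧ y k ω = false)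
      = (1 - εFS) * Pr w (fun ω => ∀ k', s ω k' = false) := by
    intro k
    have h1 : Pr w (fun ω => (∀ k', s ω k' = false) ∧ y k ω = false)
        = Pr w (fun ω => y k ω = false ∧ s ω = fun _ => false) :=
      Pr_congr w fun ω => by
        constructor
        · rintro ⟨h, hy⟩; exact ⟨hy, funext h⟩
        · rintro ⟨hy, h⟩; exact ⟨fun k' => congrFun h k', hy⟩
    have h2 : Pr w (fun ω => ∀ k', s ω k' = false)
        = Pr w (fun ω => s ω = fun _ => false) :=
      Pr_congr w fun ω => Iff.intro funext fun h k' => congrFun h k'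
    rw [h1, h2, hemit' k (fun _ => false)]
    simp
  have hyt : ∀ k : Fin N, Pr w (fun ω => y k ω = true)
      = 1 - Pr w (fun ω => y k ω = false) := by
    intro k
    have h := Pr_split w (fun _ => True) (fun ω => y k ω = false)
    rw [Pr_true w hw1] at h
    have e1 : Pr w (fun ω => True ∧ y k ω = false) = Pr w (fun ω => y k ω = false) :=
      Pr_congr w fun ω => by simp
    have e2 : Pr w (fun ω => True ∧ ¬ y k ω = false) = Pr w (fun ω => y k ω = true) :=
      Pr_congr w fun ω => by simp
    rw [e1, e2] at h
    linarith
  have hf1 : ∀ k : Fin N, Pr w (fun ω => (∀ k', s ω k' = false) ∧ y k ω = true)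
      = εFS * Pr w (fun ω => ∀ k', s ω k' = false) := by
    intro k
    have h := Pr_split w (fun ω => ∀ k', s ω k' = false) (fun ω => y k ω = false)
    have e2 : Pr w (fun ω => (∀ k', s ω k' = false) ∧ ¬ y k ω = false)
        = Pr w (fun ω => (∀ k', s ω k' = false) ∧ y k ω = true) :=
      Pr_congr w fun ω => by simp
    rw [e2, hf0 k] at h
    linarith
  -- derived bounds
  have hQ0 : 0 ≤ Pr w (fun ω => ∀ k', s ω k' = false) := Pr_nonneg w hw0 _
  have hcoef : 0 ≤ 1 - εFS - εFA := by linarith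
  have hij : Pr w (fun ω => y i ω = false) ≤ Pr w (fun ω => y j ω = false) := by
    have := mul_le_mul_of_nonneg_left hpij hcoef
    rw [hh i, hh j]; linarith
  have hpj1 : Pr w (fun ω => s ω j = false) ≤ 1 := Pr_le_one w hw0 hw1 _
  have hpj0 : 0 ≤ Pr w (fun ω => s ω j = false) := Pr_nonneg w hw0 _
  have hhj : Pr w (fun ω => y j ω = false) ≤ 1 - εFS := by
    rw [hh j]; nlinarith
  have hyi1 : 0 < Pr w (fun ω => y i ω = true) := by rw [hyt i]; linarith
  have hyj1 : 0 < Pr w (fun ω => y j ω = true) := by rw [hyt j]; linarith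
  refine sub_le_sub_left ?_ _
  rw [inf_cExp_loss w hw0 s CR CF hCR hCF _ hi0 i,
      inf_cExp_loss w hw0 s CR CF hCR hCF _ hyi1 i,
      inf_cExp_loss w hw0 s CR CF hCR hCF _ hj0 j,
      inf_cExp_loss w hw0 s CR CF hCR hCF _ hyj1 j,
      hf0 i, hf0 j, hf1 i, hf1 j, hyt i, hyt j]
  have expand : ∀ h x : ℝ, 0 < h → h * min (CF * (x / h)) CR = min (CF * x) (CR * h) := by
    intro h x hh0
    rw [mul_min_of_nonneg _ _ hh0.le]
    congr 1
    · field_simp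
    · exact mul_comm h CR
  rw [expand _ _ hi0, expand _ _ (by linarith : (0:ℝ) < 1 - Pr w (fun ω => y i ω = false)),
      expand _ _ hj0, expand _ _ (by linarith : (0:ℝ) < 1 - Pr w (fun ω => y j ω = false))]
  exact key_min_ineq CR CF _ εFS _ _ hCR hCF hQ0 hFS0 (by linarith) hij hhj
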